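/- A Boolean algebra B of uniform density is semi-Cohen if and only if the second player has a winning strategy in the infinite game G on B, in which two players alternately choose elements a₀, b₀, a₁, b₁, … of B and the second player wins if the subalgebra generated by {a₀, b₀, a₁, b₁, …} is a regular subalgebra of B. -/

import Mathlib

def Subalg {B : Type*} [BooleanAlgebra B] (A : Set B) : Prop :=
  ⊥ ∈ A ∧ ⊤ ∈ A ∧ (∀ x ∈ A, ∀ y ∈ A, x ⊔ y ∈ A) ∧ (∀ x ∈ A, xᶜ ∈ A)

def MaxACIn {B : Type*} [BooleanAlgebra B] (W A : Set B) : Prop :=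
  W ⊆ A ∧ ⊥ ∉ W ∧ W.Pairwise (fun x y => x ⊓ y = ⊥) ∧
    ∀ a ∈ A, a ≠ ⊥ → ∃ w ∈ W, a ⊓ w ≠ ⊥

/-- `X` is a regular subalgebra of `A`: every maximal antichain of `X` is maximal in `A`. -/
def RegIn {B : Type*} [BooleanAlgebra B] (X A : Set B) : Prop :=
  ∀ W : Set B, MaxACIn W X → MaxACIn W A

/-- `C` is a closed unbounded family of countable subsets of `A`. -/
def ClubIn {B : Type*} (A : Set B) (C : Set (Set B)) : Prop :=
  (∀ x ∈ C, x ⊆ A ∧ x.Countable) ∧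
  (∀ f : ℕ → Set B, (∀ n, f n ∈ C) → Monotone f → (⋃ n, f n) ∈ C) ∧
  (∀ x : Set B, x ⊆ A → x.Countable → ∃ y ∈ C, x ⊆ y)

/-- Density below `a` of the subalgebra carried by `A`. -/
noncomputable def densIn {B : Type*} [BooleanAlgebra B] (A : Set B) (a : B) : Cardinal :=
  sInf {c : Cardinal | ∃ D : Set B, D ⊆ A ∧ (∀ d ∈ D, d ≤ a ∧ d ≠ ⊥) ∧
    (∀ b ∈ A, b ≤ a → b ≠ ⊥ → ∃ d ∈ D, d ≤ b) ∧ c = Cardinal.mk ↥D}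

/-- The subalgebra carried by `A` has uniform density. -/
def UnifDensIn {B : Type*} [BooleanAlgebra B] (A : Set B) : Prop :=
  ∀ a ∈ A, a ≠ ⊥ → densIn A a = densIn A ⊤

/-- The subalgebra carried by `A` is semi-Cohen: it has uniform density and a closed
unbounded family of countable regular subalgebras. -/
def SemiCohen {B : Type*} [BooleanAlgebra B] (A : Set B) : Prop :=
  UnifDensIn A ∧ ∃ C : Set (Set B), ClubIn A C ∧ ∀ X ∈ C, Subalg X ∧ RegIn X A

/-- The subalgebra of the ambient algebra generated by `X`. -/
def genAlg {B : Type*} [BooleanAlgebra B] (X : Set B) : Set B :=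
  ⋂₀ {A : Set B | Subalg A ∧ X ⊆ A}

/-- The moves of player II produced by the strategy `σ` against the play `a` of
player I: II's `n`-th move is `σ` applied to the position `a₀, b₀, …, b_{n-1}, a_n`. -/
noncomputable def playII {B : Type*} [BooleanAlgebra B] (σ : List B → B)
    (a : ℕ → B) (n : ℕ) : B :=
  Nat.strongRecOn (motive := fun _ => B) n (fun n ih =>
    σ ((List.ofFn (fun i : Fin n => [a i.1, ih i.1 i.2])).flatten ++ [a n]))

/- ### Auxiliary lemmas -/

section Aux

variable {B : Type*} [BooleanAlgebra B]

lemma subset_genAlg (X : Set B) : X ⊆ genAlg X :=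
  fun _ hx _ hA => hA.2 hx

lemma genAlg_subset {X A : Set B} (hA : Subalg A) (h : X ⊆ A) : genAlg X ⊆ A :=
  fun x hx => hx A ⟨hA, h⟩

lemma genAlg_eq {S X : Set B} (hX : Subalg X) (h1 : S ⊆ X) (h2 : X ⊆ S) : genAlg S = X :=
  subset_antisymm (genAlg_subset hX h1) (h2.trans (subset_genAlg S))

lemma playII_eq (σ : List B → B) (a : ℕ → B) (n : ℕ) :
    playII σ a n =
      σ ((List.ofFn (fun i : Fin n => [a i.1, playII σ a i.1])).flatten ++ [a n]) := by
  show Nat.strongRecOn (motive := fun _ => B) n _ = _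
  rw [Nat.strongRecOn_eq]
  rfl

lemma flat_succ (a b : ℕ → B) (n : ℕ) :
    (List.ofFn (fun i : Fin (n+1) => [a i.1, b i.1])).flatten
      = (List.ofFn (fun i : Fin n => [a i.1, b i.1])).flatten ++ [a n, b n] := by
  rw [List.ofFn_succ', List.concat_eq_append, List.flatten_append]
  simp

lemma flat_length (a b : ℕ → B) (n : ℕ) :
    ((List.ofFn (fun i : Fin n => [a i.1, b i.1])).flatten).length = 2*n := by
  induction n with
  | zero => simp
  | succ n ih => rw [flat_succ]; simp [ih]; ring

lemma pos_length (a b : ℕ → B) (n : ℕ) :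
    ((List.ofFn (fun i : Fin n => [a i.1, b i.1])).flatten ++ [a n]).length = 2*n+1 := by
  rw [List.length_append, flat_length]; simp

lemma pos_getD (a b : ℕ → B) (n : ℕ) : ∀ k ≤ n,
    ((List.ofFn (fun i : Fin n => [a i.1, b i.1])).flatten ++ [a n]).getD (2*k) ⊥ = a k := by
  induction n with
  | zero => intro k hk; interval_cases k; simp
  | succ n ih =>
    intro k hk
    rw [flat_succ]
    have hrea : (List.ofFn (fun i : Fin n => [a i.1, b i.1])).flatten ++ [a n, b n] ++ [a (n+1)]
        = ((List.ofFn (fun i : Fin n => [a i.1, b i.1])).flatten ++ [a n]) ++ [b n, a (n+1)] := by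
      simp
    rw [hrea]
    rcases Nat.lt_or_ge k (n+1) with h | h
    · have hk' : k ≤ n := Nat.lt_succ_iff.mp h
      rw [List.getD_append]
      · exact ih k hk'
      · rw [pos_length]; omega
    · have hk2 : k = n + 1 := le_antisymm hk h
      subst hk2
      rw [List.getD_append_right]
      · rw [pos_length]
        have h1 : 2*(n+1) - (2*n+1) = 1 := by omega
        rw [h1]
        rfl
      · rw [pos_length]; omega

lemma countable_lists {s : Set B} (hs : s.Countable) :
    {l : List B | ∀ x ∈ l, x ∈ s}.Countable := by
  have := hs.to_subtype
  have h : {l : List B | ∀ x ∈ l, x ∈ s} ⊆ Set.range (fun l : List s => l.map Subtype.val) := by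
    intro l hl
    refine ⟨l.attach.map (fun x => ⟨x.1, hl x.1 x.2⟩), ?_⟩
    simp [List.map_map, Function.comp_def]
  exact (Set.countable_range _).mono h

lemma exists_bound (f : ℕ → Set B) (hf : Monotone f) :
    ∀ l : List B, (∀ x ∈ l, x ∈ ⋃ n, f n) → ∃ N, ∀ x ∈ l, x ∈ f N := by
  intro l
  induction l with
  | nil => exact fun _ => ⟨0, by simp⟩
  | cons y t ih =>
    intro h
    obtain ⟨N, hN⟩ := ih (fun x hx => h x (List.mem_cons_of_mem _ hx))
    obtain ⟨m, hm⟩ := Set.mem_iUnion.mp (h y List.mem_cons_self)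
    refine ⟨max N m, fun x hx => ?_⟩
    rcases List.mem_cons.mp hx with rfl | hx
    · exact hf (le_max_right N m) hm
    · exact hf (le_max_left N m) (hN x hx)

/-- One closure step for a set, under the Boolean operations and a strategy `σ`. -/
def stepOf (σ : List B → B) (Y : Set B) : Set B :=
  Y ∪ ({⊥} ∪ {⊤} ∪ Set.image2 (· ⊔ ·) Y Y ∪ (compl '' Y) ∪ σ '' {l | ∀ x ∈ l, x ∈ Y})

lemma subset_stepOf {σ : List B → B} {Y : Set B} : Y ⊆ stepOf σ Y :=
  Set.subset_union_left

lemma bot_mem_stepOf {σ : List B → B} {Y : Set B} : ⊥ ∈ stepOf σ Y :=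
  Or.inr <| Or.inl <| Or.inl <| Or.inl <| Or.inl rfl

lemma top_mem_stepOf {σ : List B → B} {Y : Set B} : ⊤ ∈ stepOf σ Y :=
  Or.inr <| Or.inl <| Or.inl <| Or.inl <| Or.inr rfl

lemma sup_mem_stepOf {σ : List B → B} {Y : Set B} {x y : B} (hx : x ∈ Y) (hy : y ∈ Y) :
    x ⊔ y ∈ stepOf σ Y :=
  Or.inr <| Or.inl <| Or.inl <| Or.inr <| Set.mem_image2_of_mem hx hy

lemma compl_mem_stepOf {σ : List B → B} {Y : Set B} {x : B} (hx : x ∈ Y) :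
    xᶜ ∈ stepOf σ Y :=
  Or.inr <| Or.inl <| Or.inr <| Set.mem_image_of_mem _ hx

lemma sigma_mem_stepOf {σ : List B → B} {Y : Set B} {l : List B} (hl : ∀ x ∈ l, x ∈ Y) :
    σ l ∈ stepOf σ Y :=
  Or.inr <| Or.inr <| Set.mem_image_of_mem _ hl

lemma stepOf_countable {σ : List B → B} {Y : Set B} (h : Y.Countable) :
    (stepOf σ Y).Countable := by
  refine h.union ?_
  refine (((((Set.countable_singleton _).union (Set.countable_singleton _)).union
    (h.image2 h _)).union (h.image _)).union ((countable_lists h).image _))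

/-- The sets chosen by the strategy construction in the forward direction. -/
def XfOf {B : Type*} [BooleanAlgebra B] (pick : Set B → Set B) : List B → Set B
  | [] => pick ∅
  | x :: t => pick (insert x (XfOf pick t))

/-- The strategy for II extracted from a club of regular subalgebras. -/
def sigOf (pick : Set B → Set B) (enum : Set B → ℕ → B) : List B → B :=
  fun l => enum (XfOf pick (((List.range ((Nat.unpair (l.length/2)).1 + 1)).map
    (fun k => l.getD (2*k) ⊥)).reverse)) ((Nat.unpair (l.length/2)).2)

lemma forward_aux {C : Set (Set B)} (hC : ClubIn Set.univ C)
    (hreg : ∀ X ∈ C, Subalg X ∧ RegIn X Set.univ)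
    (pick : Set B → Set B) (hpick : ∀ s : Set B, s.Countable → pick s ∈ C ∧ s ⊆ pick s)
    (enum : Set B → ℕ → B)
    (henum : ∀ s : Set B, s.Countable → s.Nonempty → s = Set.range (enum s))
    (a : ℕ → B) :
    RegIn (genAlg (Set.range a ∪ Set.range (playII (sigOf pick enum) a))) Set.univ := by
  set σ := sigOf pick enum with hσ
  -- basic properties of XfOf
  have hXf : ∀ l : List B, XfOf pick l ∈ C ∧ ∀ x ∈ l, x ∈ XfOf pick l := by
    intro l
    induction l with
    | nil => exact ⟨(hpick ∅ Set.countable_empty).1, by simp⟩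
    | cons y t ih =>
      have hct : (XfOf pick t).Countable := (hC.1 _ ih.1).2
      have h := hpick (insert y (XfOf pick t)) (hct.insert y)
      refine ⟨h.1, fun x hx => ?_⟩
      rcases List.mem_cons.mp hx with rfl | hx
      · exact h.2 (Set.mem_insert _ _)
      · exact h.2 (Set.subset_insert _ _ (ih.2 x hx))
  set Y : ℕ → Set B := fun i => XfOf pick (((List.range (i+1)).map a).reverse) with hY
  have hYC : ∀ i, Y i ∈ C := fun i => (hXf _).1
  have haY : ∀ k i, k ≤ i → a k ∈ Y i := by
    intro k i hk
    refine (hXf _).2 _ ?_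
    rw [List.mem_reverse, List.mem_map]
    exact ⟨k, List.mem_range.mpr (Nat.lt_succ_of_le hk), rfl⟩
  have hYmono : Monotone Y := by
    apply monotone_nat_of_le_succ
    intro i
    have hrw : ((List.range (i+1+1)).map a).reverse = a (i+1) :: ((List.range (i+1)).map a).reverse := by
      rw [List.range_succ]; simp
    show Y i ⊆ Y (i+1)
    rw [hY]
    simp only []
    rw [hrw]
    show Y i ⊆ XfOf pick (a (i+1) :: ((List.range (i+1)).map a).reverse)
    show Y i ⊆ pick (insert (a (i+1)) (Y i))
    exact (Set.subset_insert _ _).trans (hpick _ (((hC.1 _ (hYC i)).2).insert _)).2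
  -- computing II's moves
  have hplay : ∀ n, playII σ a n = enum (Y ((Nat.unpair n).1)) ((Nat.unpair n).2) := by
    intro n
    rw [playII_eq]
    rw [hσ]
    show enum (XfOf pick _) _ = _
    rw [pos_length a (playII σ a) n]
    have h2 : (2*n+1)/2 = n := by omega
    rw [h2]
    have h3 : (List.range ((Nat.unpair n).1 + 1)).map
        (fun k => ((List.ofFn (fun i : Fin n => [a i.1, playII σ a i.1])).flatten
          ++ [a n]).getD (2*k) ⊥) = (List.range ((Nat.unpair n).1 + 1)).map a := by
      apply List.map_congr_left
      intro k hk
      exact pos_getD a (playII σ a) n k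
        (le_trans (Nat.lt_succ_iff.mp (List.mem_range.mp hk)) (Nat.unpair_left_le n))
    rw [h3]
  have henumY : ∀ i, Y i = Set.range (enum (Y i)) := fun i =>
    henum _ (hC.1 _ (hYC i)).2 ⟨a i, haY i i le_rfl⟩
  -- the union
  have hU : (⋃ i, Y i) ∈ C := hC.2.1 Y hYC hYmono
  have hUsub : Subalg (⋃ i, Y i) := (hreg _ hU).1
  have hgen : genAlg (Set.range a ∪ Set.range (playII σ a)) = ⋃ i, Y i := by
    apply genAlg_eq hUsub
    · apply Set.union_subset
      · rintro x ⟨n, rfl⟩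
        exact Set.mem_iUnion.mpr ⟨n, haY n n le_rfl⟩
      · rintro x ⟨n, rfl⟩
        rw [hplay n]
        refine Set.mem_iUnion.mpr ⟨(Nat.unpair n).1, ?_⟩
        have h := Set.mem_range_self (f := enum (Y (Nat.unpair n).1)) (Nat.unpair n).2
        rwa [← henumY] at h
    · intro x hx
      obtain ⟨i, hi⟩ := Set.mem_iUnion.mp hx
      rw [henumY i] at hi
      obtain ⟨j, hj⟩ := hi
      refine Or.inr ⟨Nat.pair i j, ?_⟩
      rw [hplay, Nat.unpair_pair, hj]
  rw [hgen]
  exact (hreg _ hU).2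

end Aux

/-- Theorem 4.3 ((a)↔(d)): a Boolean algebra `B` of uniform density is semi-Cohen iff
player II has a winning strategy in the game `G` where the players alternately pick
elements `a₀, b₀, a₁, b₁, …` of `B` and II wins if the subalgebra generated by all
chosen elements is a regular subalgebra of `B`. -/
theorem semiCohen_iff_II_wins {B : Type*} [BooleanAlgebra B]
    (hud : UnifDensIn (Set.univ : Set B)) :
    SemiCohen (Set.univ : Set B) ↔
      ∃ σ : List B → B, ∀ a : ℕ → B,
        RegIn (genAlg (Set.range a ∪ Set.range (playII σ a))) Set.univ := by
  constructor
  · rintro ⟨-, C, hC, hreg⟩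
    classical
    have key : ∀ s : Set B, ∃ t : Set B, s.Countable → t ∈ C ∧ s ⊆ t := by
      intro s
      by_cases h : s.Countable
      · obtain ⟨y, hy, hsy⟩ := hC.2.2 s (Set.subset_univ s) h
        exact ⟨y, fun _ => ⟨hy, hsy⟩⟩
      · exact ⟨∅, fun h' => absurd h' h⟩
    choose pick hpick using key
    have key2 : ∀ s : Set B, ∃ e : ℕ → B, s.Countable → s.Nonempty → s = Set.range e := by
      intro s
      by_cases h : s.Countable ∧ s.Nonempty
      · obtain ⟨e, he⟩ := h.1.exists_eq_range h.2
        exact ⟨e, fun _ _ => he⟩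
      · exact ⟨fun _ => ⊥, fun h1 h2 => absurd ⟨h1, h2⟩ h⟩
    choose enum henum using key2
    exact ⟨sigOf pick enum, forward_aux hC hreg pick hpick enum henum⟩
  · rintro ⟨σ, hσ⟩
    refine ⟨hud, {X : Set B | Subalg X ∧ X.Countable ∧
      ∀ l : List B, (∀ x ∈ l, x ∈ X) → σ l ∈ X}, ⟨?_, ?_, ?_⟩, ?_⟩
    · exact fun x hx => ⟨Set.subset_univ x, hx.2.1⟩
    · -- closed under monotone unions
      intro f hf hmono
      refine ⟨⟨?_, ?_, ?_, ?_⟩, Set.countable_iUnion (fun n => (hf n).2.1), ?_⟩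
      · exact Set.mem_iUnion.mpr ⟨0, (hf 0).1.1⟩
      · exact Set.mem_iUnion.mpr ⟨0, (hf 0).1.2.1⟩
      · intro x hx y hy
        obtain ⟨m, hm⟩ := Set.mem_iUnion.mp hx
        obtain ⟨k, hk⟩ := Set.mem_iUnion.mp hy
        exact Set.mem_iUnion.mpr ⟨max m k, (hf _).1.2.2.1 x (hmono (le_max_left m k) hm)
          y (hmono (le_max_right m k) hk)⟩
      · intro x hx
        obtain ⟨m, hm⟩ := Set.mem_iUnion.mp hx
        exact Set.mem_iUnion.mpr ⟨m, (hf m).1.2.2.2 x hm⟩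
      · intro l hl
        obtain ⟨N, hN⟩ := exists_bound f hmono l hl
        exact Set.mem_iUnion.mpr ⟨N, (hf N).2.2 l hN⟩
    · -- unbounded
      intro s _ hs
      set Y : ℕ → Set B := fun n => (stepOf σ)^[n] s with hYdef
      have hYsucc : ∀ n, Y (n+1) = stepOf σ (Y n) := by
        intro n; rw [hYdef]; simp only []; rw [Function.iterate_succ_apply']
      have hYmono : Monotone Y := by
        apply monotone_nat_of_le_succ
        intro n; rw [hYsucc]; exact subset_stepOf
      have hYcnt : ∀ n, (Y n).Countable := by
        intro n
        induction n with
        | zero => exact hs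
        | succ n ih => rw [hYsucc]; exact stepOf_countable ih
      refine ⟨⋃ n, Y n, ⟨⟨?_, ?_, ?_, ?_⟩, Set.countable_iUnion hYcnt, ?_⟩, ?_⟩
      · exact Set.mem_iUnion.mpr ⟨1, by rw [hYsucc]; exact bot_mem_stepOf⟩
      · exact Set.mem_iUnion.mpr ⟨1, by rw [hYsucc]; exact top_mem_stepOf⟩
      · intro x hx y hy
        obtain ⟨m, hm⟩ := Set.mem_iUnion.mp hx
        obtain ⟨k, hk⟩ := Set.mem_iUnion.mp hy
        refine Set.mem_iUnion.mpr ⟨max m k + 1, ?_⟩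
        rw [hYsucc]
        exact sup_mem_stepOf (hYmono (le_max_left m k) hm) (hYmono (le_max_right m k) hk)
      · intro x hx
        obtain ⟨m, hm⟩ := Set.mem_iUnion.mp hx
        exact Set.mem_iUnion.mpr ⟨m+1, by rw [hYsucc]; exact compl_mem_stepOf hm⟩
      · intro l hl
        obtain ⟨N, hN⟩ := exists_bound Y hYmono l hl
        exact Set.mem_iUnion.mpr ⟨N+1, by rw [hYsucc]; exact sigma_mem_stepOf hN⟩
      · exact Set.subset_iUnion Y 0
    · -- every member of the club is a regular subalgebra
      rintro X ⟨hsub, hcnt, hcl⟩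
      refine ⟨hsub, ?_⟩
      obtain ⟨a, ha⟩ := hcnt.exists_eq_range ⟨⊥, hsub.1⟩
      have haX : ∀ n, a n ∈ X := by intro n; rw [ha]; exact Set.mem_range_self n
      have hplay : ∀ n, playII σ a n ∈ X := by
        intro n
        induction n using Nat.strong_induction_on with
        | _ n ih =>
          rw [playII_eq]
          apply hcl
          intro x hx
          rcases List.mem_append.mp hx with hx | hx
          · obtain ⟨l, hl, hxl⟩ := List.mem_flatten.mp hx
            obtain ⟨i, rfl⟩ := List.mem_ofFn.mp hl
            rcases List.mem_cons.mp hxl with rfl | hxl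
            · exact haX _
            · rcases List.mem_cons.mp hxl with rfl | hxl
              · exact ih i.1 i.2
              · simp at hxl
          · rcases List.mem_cons.mp hx with rfl | hx
            · exact haX n
            · simp at hx
      have hgen : genAlg (Set.range a ∪ Set.range (playII σ a)) = X := by
        apply genAlg_eq hsub
        · apply Set.union_subset
          · rintro x ⟨n, rfl⟩; exact haX n
          · rintro x ⟨n, rfl⟩; exact hplay n
        · intro x hx
          rw [ha] at hx
          exact Or.inl hx
      rw [← hgen]
      exact hσ a
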